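/- Let K be an algebraically closed field complete with respect to a nontrivial non-archimedean absolute value, with residue characteristic not 2, and let x be a point of the Berkovich affine line with |λ|_x = diam(x) = R > 1 (i.e., x = ζ_{c,R} with |c| ≤ R; take x = ζ_{0,R}). Then for the family f_λ(z) = z² + λ, the field H(x) (the completed residue field at x) does not contain a square root of the coordinate function λ, while the degree-2 extension H(x)(√λ) does; consequently each of the two fixed points of z ↦ z² + λ lying over the 'repelling pair' generates a degree-2 extension of H(x), so these type I repelling fixed points have multiplicity [H(ξ) : H(x)] = 2. -/

import Mathlib

open Polynomial

/-- The norm `|P|_{ζ_{0,R}} = max_k ‖c_k‖ R^k` of a polynomial `P = Σ c_k λ^k` at the point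
`ζ_{0,R}` of the Berkovich parameter line. -/
noncomputable def gaussNormR {K : Type*} [NormedField K] (R : ℝ) (P : Polynomial K) : ℝ :=
  (Finset.range (P.natDegree + 1)).sup'
    (Finset.nonempty_range_iff.mpr (Nat.succ_ne_zero _))
    (fun k => ‖P.coeff k‖ * R ^ k)

section Aux

variable {K : Type*} [NormedField K] {R : ℝ}

lemma norm_add_eq_of_lt [IsUltrametricDist K] {a b : K} (h : ‖b‖ < ‖a‖) : ‖a + b‖ = ‖a‖ := by
  refine le_antisymm ((IsUltrametricDist.norm_add_le_max a b).trans (max_le le_rfl h.le)) ?_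
  have h2 : ‖a‖ ≤ max ‖a + b‖ ‖b‖ := by
    calc ‖a‖ = ‖a + b + -b‖ := by rw [add_neg_cancel_right]
      _ ≤ max ‖a + b‖ ‖-b‖ := IsUltrametricDist.norm_add_le_max _ _
      _ = max ‖a + b‖ ‖b‖ := by rw [norm_neg]
  rcases max_cases ‖a + b‖ ‖b‖ with ⟨he, _⟩ | ⟨he, _⟩
  · rw [he] at h2; exact h2
  · rw [he] at h2; linarith

lemma gauss_nonneg (hR : 0 < R) (P : Polynomial K) : 0 ≤ gaussNormR R P := by
  refine le_trans (by positivity) (Finset.le_sup' (f := fun k => ‖P.coeff k‖ * R ^ k)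
    (b := 0) ?_)
  exact Finset.mem_range.mpr (Nat.succ_pos _)

lemma gauss_coeff_le (hR : 0 < R) (P : Polynomial K) (k : ℕ) :
    ‖P.coeff k‖ * R ^ k ≤ gaussNormR R P := by
  by_cases hk : k ≤ P.natDegree
  · exact Finset.le_sup' (f := fun k => ‖P.coeff k‖ * R ^ k)
      (Finset.mem_range.mpr (Nat.lt_succ_of_le hk))
  · rw [P.coeff_eq_zero_of_natDegree_lt (lt_of_not_ge hk)]
    simpa using gauss_nonneg hR P

lemma gauss_pos (hR : 0 < R) {P : Polynomial K} (hP : P ≠ 0) : 0 < gaussNormR R P := by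
  refine lt_of_lt_of_le ?_ (gauss_coeff_le hR P P.natDegree)
  have h : P.coeff P.natDegree ≠ 0 := Polynomial.leadingCoeff_ne_zero.mpr hP
  exact mul_pos (norm_pos_iff.mpr h) (pow_pos hR _)

lemma gauss_zero : gaussNormR R (0 : Polynomial K) = 0 := by
  simp [gaussNormR]

lemma gauss_C (c : K) : gaussNormR R (C c) = ‖c‖ := by
  simp [gaussNormR]

lemma gauss_neg (hR : 0 < R) (P : Polynomial K) : gaussNormR R (-P) = gaussNormR R P := by
  have key : ∀ Q : Polynomial K, gaussNormR R (-Q) ≤ gaussNormR R Q := by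
    intro Q
    refine Finset.sup'_le _ _ fun k _ => ?_
    rw [Polynomial.coeff_neg, norm_neg]
    exact gauss_coeff_le hR Q k
  refine le_antisymm (key P) ?_
  have := key (-P)
  rwa [neg_neg] at this

lemma gauss_exists_dom (hR : 0 < R) {P : Polynomial K} (hP : P ≠ 0) :
    ∃ i, ‖P.coeff i‖ * R ^ i = gaussNormR R P ∧
      ∀ k, i < k → ‖P.coeff k‖ * R ^ k < gaussNormR R P := by
  classical
  set S := (Finset.range (P.natDegree + 1)).filter
      (fun k => gaussNormR R P ≤ ‖P.coeff k‖ * R ^ k) with hS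
  have hSne : S.Nonempty := by
    obtain ⟨b, hb, hbe⟩ := Finset.exists_mem_eq_sup'
      (Finset.nonempty_range_iff.mpr (Nat.succ_ne_zero P.natDegree))
      (fun k => ‖P.coeff k‖ * R ^ k)
    exact ⟨b, Finset.mem_filter.mpr ⟨hb, le_of_eq hbe⟩⟩
  set i := S.max' hSne with hi
  have hiS : i ∈ S := S.max'_mem hSne
  have hieq : ‖P.coeff i‖ * R ^ i = gaussNormR R P :=
    le_antisymm (gauss_coeff_le hR P i) (Finset.mem_filter.mp hiS).2
  refine ⟨i, hieq, fun k hk => ?_⟩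
  by_cases hkd : k ≤ P.natDegree
  · have hkS : k ∉ S := fun hkS => absurd (S.le_max' k hkS) (not_le.mpr hk)
    have hns : ¬ gaussNormR R P ≤ ‖P.coeff k‖ * R ^ k := fun hle =>
      hkS (Finset.mem_filter.mpr ⟨Finset.mem_range.mpr (Nat.lt_succ_of_le hkd), hle⟩)
    exact not_le.mp hns
  · rw [P.coeff_eq_zero_of_natDegree_lt (lt_of_not_ge hkd)]
    simpa using gauss_pos hR hP

lemma gauss_coeff_mul_bound [IsUltrametricDist K] (hR : 0 < R) (P Q : Polynomial K) (m : ℕ) :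
    ∃ a b : ℕ, a + b = m ∧
      ‖(P * Q).coeff m‖ * R ^ m ≤ (‖P.coeff a‖ * R ^ a) * (‖Q.coeff b‖ * R ^ b) := by
  have hne : (Finset.HasAntidiagonal.antidiagonal m).Nonempty := ⟨(0, m), by simp⟩
  obtain ⟨x, hx, hxe⟩ := Finset.exists_mem_eq_sup' hne
    (fun x => ‖P.coeff x.1 * Q.coeff x.2‖)
  have hxab : x.1 + x.2 = m := Finset.HasAntidiagonal.mem_antidiagonal.mp hx
  refine ⟨x.1, x.2, hxab, ?_⟩
  have h1 : ‖(P * Q).coeff m‖ ≤ ‖P.coeff x.1 * Q.coeff x.2‖ := by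
    rw [Polynomial.coeff_mul]
    exact (hne.norm_sum_le_sup'_norm _).trans (le_of_eq hxe)
  have h2 : (R:ℝ) ^ m = R ^ x.1 * R ^ x.2 := by rw [← pow_add, hxab]
  rw [norm_mul] at h1
  calc ‖(P * Q).coeff m‖ * R ^ m ≤ ‖P.coeff x.1‖ * ‖Q.coeff x.2‖ * R ^ m := by
        apply mul_le_mul_of_nonneg_right h1 (by positivity)
    _ = (‖P.coeff x.1‖ * R ^ x.1) * (‖Q.coeff x.2‖ * R ^ x.2) := by rw [h2]; ring

lemma gauss_coeff_sq_lt [IsUltrametricDist K] (hR : 0 < R) (P : Polynomial K) {i : ℕ}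
    (hG : 0 < gaussNormR R P)
    (hi' : ∀ k, i < k → ‖P.coeff k‖ * R ^ k < gaussNormR R P) :
    ∀ m, 2 * i < m → ‖(P * P).coeff m‖ * R ^ m < (gaussNormR R P) ^ 2 := by
  intro m hm
  obtain ⟨a, b, hab, hle⟩ := gauss_coeff_mul_bound hR P P m
  have h1 : i < a ∨ i < b := by omega
  have ha' : ‖P.coeff a‖ * R ^ a ≤ gaussNormR R P := gauss_coeff_le hR P a
  have hb' : ‖P.coeff b‖ * R ^ b ≤ gaussNormR R P := gauss_coeff_le hR P b
  have hna : (0:ℝ) ≤ ‖P.coeff a‖ * R ^ a := by positivity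
  have hnb : (0:ℝ) ≤ ‖P.coeff b‖ * R ^ b := by positivity
  rcases h1 with h | h
  · have := hi' a h
    nlinarith
  · have := hi' b h
    nlinarith

lemma gauss_coeff_sq_eq [IsUltrametricDist K] (hR : 0 < R) (P : Polynomial K) {i : ℕ}
    (hG : 0 < gaussNormR R P)
    (hi : ‖P.coeff i‖ * R ^ i = gaussNormR R P)
    (hi' : ∀ k, i < k → ‖P.coeff k‖ * R ^ k < gaussNormR R P) :
    ‖(P * P).coeff (2 * i)‖ * R ^ (2 * i) = (gaussNormR R P) ^ 2 := by
  classical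
  have hmem : ((i, i) : ℕ × ℕ) ∈ Finset.HasAntidiagonal.antidiagonal (2 * i) := by
    rw [Finset.HasAntidiagonal.mem_antidiagonal]; omega
  have hsplit : (P * P).coeff (2 * i)
      = P.coeff i * P.coeff i
        + ∑ x ∈ (Finset.HasAntidiagonal.antidiagonal (2 * i)).erase (i, i), P.coeff x.1 * P.coeff x.2 := by
    rw [Polynomial.coeff_mul]
    exact (Finset.add_sum_erase _ _ hmem).symm
  have hRi : (R:ℝ) ^ (2 * i) = R ^ i * R ^ i := by rw [two_mul, pow_add]
  have hmain : ‖P.coeff i * P.coeff i‖ * R ^ (2 * i) = (gaussNormR R P) ^ 2 := by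
    rw [norm_mul, hRi, ← hi]; ring
  have hrest : ‖∑ x ∈ (Finset.HasAntidiagonal.antidiagonal (2 * i)).erase (i, i),
      P.coeff x.1 * P.coeff x.2‖ * R ^ (2 * i) < (gaussNormR R P) ^ 2 := by
    rcases Finset.eq_empty_or_nonempty ((Finset.HasAntidiagonal.antidiagonal (2 * i)).erase (i, i)) with he | hne
    · rw [he]; simp; positivity
    · obtain ⟨x, hx, hxe⟩ := Finset.exists_mem_eq_sup' hne
        (fun x => ‖P.coeff x.1 * P.coeff x.2‖)
      have hxmem := Finset.mem_of_mem_erase hx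
      have hxab : x.1 + x.2 = 2 * i := Finset.HasAntidiagonal.mem_antidiagonal.mp hxmem
      have hxne : x ≠ (i, i) := Finset.ne_of_mem_erase hx
      have h1 : ‖∑ x ∈ (Finset.HasAntidiagonal.antidiagonal (2 * i)).erase (i, i), P.coeff x.1 * P.coeff x.2‖
          ≤ ‖P.coeff x.1 * P.coeff x.2‖ :=
        (hne.norm_sum_le_sup'_norm _).trans (le_of_eq hxe)
      have hcase : i < x.1 ∨ i < x.2 := by
        rcases Nat.lt_trichotomy x.1 i with h | h | h
        · right; omega
        · exfalso; apply hxne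
          have h2 : x.2 = i := by omega
          exact Prod.ext h h2
        · left; exact h
      have hR2 : (R:ℝ) ^ (2 * i) = R ^ x.1 * R ^ x.2 := by rw [← pow_add, hxab]
      have ha' : ‖P.coeff x.1‖ * R ^ x.1 ≤ gaussNormR R P := gauss_coeff_le hR P x.1
      have hb' : ‖P.coeff x.2‖ * R ^ x.2 ≤ gaussNormR R P := gauss_coeff_le hR P x.2
      have hna : (0:ℝ) ≤ ‖P.coeff x.1‖ * R ^ x.1 := by positivity
      have hnb : (0:ℝ) ≤ ‖P.coeff x.2‖ * R ^ x.2 := by positivity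
      have key : ‖P.coeff x.1 * P.coeff x.2‖ * R ^ (2 * i) < (gaussNormR R P) ^ 2 := by
        rw [norm_mul, hR2]
        rcases hcase with h | h
        · have := hi' x.1 h; nlinarith
        · have := hi' x.2 h; nlinarith
      calc ‖∑ x ∈ (Finset.HasAntidiagonal.antidiagonal (2 * i)).erase (i, i), P.coeff x.1 * P.coeff x.2‖
            * R ^ (2 * i)
          ≤ ‖P.coeff x.1 * P.coeff x.2‖ * R ^ (2 * i) :=
            mul_le_mul_of_nonneg_right h1 (by positivity)
        _ < _ := key
  have hlt : ‖∑ x ∈ (Finset.HasAntidiagonal.antidiagonal (2 * i)).erase (i, i), P.coeff x.1 * P.coeff x.2‖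
      < ‖P.coeff i * P.coeff i‖ := by
    have hRpos : (0:ℝ) < R ^ (2 * i) := by positivity
    nlinarith [hrest, hmain]
  rw [hsplit, norm_add_eq_of_lt hlt, hmain]

lemma gauss_sub_le [IsUltrametricDist K] (hR : 0 < R) (P Q : Polynomial K) :
    gaussNormR R (P - Q) ≤ max (gaussNormR R P) (gaussNormR R Q) := by
  apply Finset.sup'_le
  intro k hk
  rw [Polynomial.coeff_sub, sub_eq_add_neg]
  calc ‖P.coeff k + -(Q.coeff k)‖ * R ^ k
      ≤ max ‖P.coeff k‖ ‖-(Q.coeff k)‖ * R ^ k := by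
        apply mul_le_mul_of_nonneg_right (IsUltrametricDist.norm_add_le_max _ _) (by positivity)
    _ = max (‖P.coeff k‖ * R ^ k) (‖Q.coeff k‖ * R ^ k) := by
        rw [norm_neg, max_mul_of_nonneg _ _ (by positivity : (0:ℝ) ≤ R ^ k)]
    _ ≤ max (gaussNormR R P) (gaussNormR R Q) :=
        max_le_max (gauss_coeff_le hR P k) (gauss_coeff_le hR Q k)

lemma gauss_linear [IsUltrametricDist K] (hR : 1 < R) {c₀ c₁ : K} (hc1 : ‖c₁‖ = 1)
    (hc0 : ‖c₀‖ < R) : gaussNormR R (C c₀ + C c₁ * X) = R := by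
  have hR0 : (0:ℝ) < R := lt_trans one_pos hR
  set A : Polynomial K := C c₀ + C c₁ * X with hA
  have hub : ∀ k, ‖A.coeff k‖ * R ^ k ≤ R := by
    intro k
    match k with
    | 0 => simpa [hA] using le_of_lt hc0
    | 1 => simp [hA, hc1]
    | (n+2) =>
      have hz : A.coeff (n+2) = 0 := by
        simp [hA, Polynomial.coeff_X]
      rw [hz]; simp; linarith
  refine le_antisymm (Finset.sup'_le _ _ fun k _ => hub k) ?_
  have h1 := gauss_coeff_le hR0 A 1
  have hA1 : ‖A.coeff 1‖ * R ^ 1 = R := by simp [hA, hc1]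
  linarith

lemma gauss_key [IsUltrametricDist K] (hR : 1 < R)
    (hmul : ∀ S T : Polynomial K, gaussNormR R (S * T) = gaussNormR R S * gaussNormR R T)
    {c₀ c₁ : K} (hc1 : ‖c₁‖ = 1) (hc0 : ‖c₀‖ < R)
    (P Q : Polynomial K) (hQ : Q ≠ 0) :
    R * (gaussNormR R Q) ^ 2 ≤ gaussNormR R (P * P - (C c₀ + C c₁ * X) * (Q * Q)) := by
  have hR0 : (0:ℝ) < R := lt_trans one_pos hR
  have hc1' : c₁ ≠ 0 := by intro h; rw [h, norm_zero] at hc1; norm_num at hc1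
  set A : Polynomial K := C c₀ + C c₁ * X with hA
  have hGA : gaussNormR R A = R := gauss_linear hR hc1 hc0
  have hGQ : 0 < gaussNormR R Q := gauss_pos hR0 hQ
  have hGAQ : gaussNormR R (A * (Q * Q)) = R * (gaussNormR R Q) ^ 2 := by
    rw [hmul, hmul, hGA]; ring
  set M : ℝ := R * (gaussNormR R Q) ^ 2 with hM
  have hMpos : 0 < M := by positivity
  by_cases hPA : gaussNormR R (P * P) = M
  · -- equal norms: parity argument on top dominant indices
    have hP : P ≠ 0 := by
      intro h
      rw [h, zero_mul, gauss_zero] at hPA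
      linarith
    have hGP : 0 < gaussNormR R P := gauss_pos hR0 hP
    have hPP : (gaussNormR R P) ^ 2 = M := by rw [← hPA, hmul]; ring
    obtain ⟨i, hi, hi'⟩ := gauss_exists_dom hR0 hP
    obtain ⟨j, hj, hj'⟩ := gauss_exists_dom hR0 hQ
    have hQQle : ∀ k, ‖(Q * Q).coeff k‖ * R ^ k ≤ (gaussNormR R Q) ^ 2 := by
      intro k
      have h := gauss_coeff_le hR0 (Q * Q) k
      rw [hmul Q Q] at h
      rw [sq]
      exact h
    have hQQeq : ‖(Q * Q).coeff (2 * j)‖ * R ^ (2 * j) = (gaussNormR R Q) ^ 2 :=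
      gauss_coeff_sq_eq hR0 Q hGQ hj hj'
    have hQQlt : ∀ m, 2 * j < m → ‖(Q * Q).coeff m‖ * R ^ m < (gaussNormR R Q) ^ 2 :=
      gauss_coeff_sq_lt hR0 Q hGQ hj'
    have hPPeq : ‖(P * P).coeff (2 * i)‖ * R ^ (2 * i) = M := by
      rw [gauss_coeff_sq_eq hR0 P hGP hi hi', hPP]
    have hPPlt : ∀ m, 2 * i < m → ‖(P * P).coeff m‖ * R ^ m < M := by
      intro m hm
      have := gauss_coeff_sq_lt hR0 P hGP hi' m hm
      rwa [hPP] at this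
    have hAS : ∀ m : ℕ, (A * (Q * Q)).coeff (m + 1)
        = c₀ * (Q * Q).coeff (m + 1) + c₁ * (Q * Q).coeff m := by
      intro m
      rw [hA, add_mul, Polynomial.coeff_add, Polynomial.coeff_C_mul, mul_assoc,
        Polynomial.coeff_C_mul, Polynomial.coeff_X_mul]
    rcases Nat.lt_trichotomy (2 * i) (2 * j + 1) with hc | hc | hc
    · -- target coefficient 2j+1, dominated by the c₁ λ Q² term
      set m : ℕ := 2 * j + 1 with hm
      have hy : (A * (Q * Q)).coeff m = c₀ * (Q * Q).coeff (2 * j + 1) + c₁ * (Q * Q).coeff (2 * j) :=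
        hAS (2 * j)
      have ht2 : ‖c₁ * (Q * Q).coeff (2 * j)‖ * R ^ m = M := by
        rw [norm_mul, hc1, one_mul, hm, pow_succ]
        calc ‖(Q * Q).coeff (2 * j)‖ * (R ^ (2 * j) * R)
            = (‖(Q * Q).coeff (2 * j)‖ * R ^ (2 * j)) * R := by ring
          _ = (gaussNormR R Q) ^ 2 * R := by rw [hQQeq]
          _ = M := by rw [hM]; ring
      have ht1 : ‖c₀ * (Q * Q).coeff (2 * j + 1)‖ * R ^ m < M := by
        rw [norm_mul, hm]
        have h1 := hQQlt (2 * j + 1) (by omega)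
        have h2 : (0:ℝ) ≤ ‖c₀‖ := norm_nonneg _
        calc ‖c₀‖ * ‖(Q * Q).coeff (2 * j + 1)‖ * R ^ (2 * j + 1)
            = ‖c₀‖ * (‖(Q * Q).coeff (2 * j + 1)‖ * R ^ (2 * j + 1)) := by ring
          _ ≤ ‖c₀‖ * gaussNormR R Q ^ 2 := mul_le_mul_of_nonneg_left h1.le h2
          _ < R * gaussNormR R Q ^ 2 := mul_lt_mul_of_pos_right hc0 (by positivity)
          _ = M := hM.symm
      have hRm : (0:ℝ) < R ^ m := by positivity
      have hylt : ‖c₀ * (Q * Q).coeff (2 * j + 1)‖ < ‖c₁ * (Q * Q).coeff (2 * j)‖ := by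
        rw [← mul_lt_mul_iff_of_pos_right hRm, ht2]; exact ht1
      have hynorm : ‖(A * (Q * Q)).coeff m‖ * R ^ m = M := by
        rw [hy, add_comm, norm_add_eq_of_lt hylt, ht2]
      have hxlt : ‖(P * P).coeff m‖ < ‖(A * (Q * Q)).coeff m‖ := by
        rw [← mul_lt_mul_iff_of_pos_right hRm, hynorm]
        exact hPPlt m (by omega)
      have hfin : ‖(P * P - A * (Q * Q)).coeff m‖ * R ^ m = M := by
        rw [Polynomial.coeff_sub, sub_eq_add_neg, add_comm]
        have hxlt' : ‖(P * P).coeff m‖ < ‖-((A * (Q * Q)).coeff m)‖ := by rwa [norm_neg]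
        rw [norm_add_eq_of_lt hxlt', norm_neg, hynorm]
      calc M = ‖(P * P - A * (Q * Q)).coeff m‖ * R ^ m := hfin.symm
        _ ≤ _ := gauss_coeff_le hR0 _ m
    · omega
    · -- target coefficient 2i, dominated by the P² term
      set m : ℕ := 2 * i with hm
      have him : 1 ≤ i := by omega
      have hy : (A * (Q * Q)).coeff m
          = c₀ * (Q * Q).coeff (2 * i) + c₁ * (Q * Q).coeff (2 * i - 1) := by
        have h1 : m = (2 * i - 1) + 1 := by omega
        rw [hm] at h1 ⊢
        rw [h1, hAS (2 * i - 1), ← h1]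
      have ht1 : ‖c₀ * (Q * Q).coeff (2 * i)‖ * R ^ m < M := by
        rw [norm_mul, hm]
        have h1 := hQQle (2 * i)
        have h3 : (0:ℝ) ≤ ‖c₀‖ := norm_nonneg _
        calc ‖c₀‖ * ‖(Q * Q).coeff (2 * i)‖ * R ^ (2 * i)
            = ‖c₀‖ * (‖(Q * Q).coeff (2 * i)‖ * R ^ (2 * i)) := by ring
          _ ≤ ‖c₀‖ * gaussNormR R Q ^ 2 := mul_le_mul_of_nonneg_left h1 h3
          _ < R * gaussNormR R Q ^ 2 := mul_lt_mul_of_pos_right hc0 (by positivity)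
          _ = M := hM.symm
      have ht2 : ‖c₁ * (Q * Q).coeff (2 * i - 1)‖ * R ^ m < M := by
        rw [norm_mul, hc1, one_mul]
        have h1 : m = (2 * i - 1) + 1 := by omega
        rw [h1, pow_succ]
        have h2 := hQQlt (2 * i - 1) (by omega)
        calc ‖(Q * Q).coeff (2 * i - 1)‖ * (R ^ (2 * i - 1) * R)
            = (‖(Q * Q).coeff (2 * i - 1)‖ * R ^ (2 * i - 1)) * R := by ring
          _ < (gaussNormR R Q) ^ 2 * R := by
              apply mul_lt_mul_of_pos_right h2 hR0
          _ = M := by rw [hM]; ring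
      have hRm : (0:ℝ) < R ^ m := by positivity
      have hynorm : ‖(A * (Q * Q)).coeff m‖ * R ^ m < M := by
        rw [hy]
        have hb := IsUltrametricDist.norm_add_le_max (c₀ * (Q * Q).coeff (2 * i))
          (c₁ * (Q * Q).coeff (2 * i - 1))
        calc ‖c₀ * (Q * Q).coeff (2 * i) + c₁ * (Q * Q).coeff (2 * i - 1)‖ * R ^ m
            ≤ max ‖c₀ * (Q * Q).coeff (2 * i)‖ ‖c₁ * (Q * Q).coeff (2 * i - 1)‖ * R ^ m :=
              mul_le_mul_of_nonneg_right hb (le_of_lt hRm)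
          _ = max (‖c₀ * (Q * Q).coeff (2 * i)‖ * R ^ m)
              (‖c₁ * (Q * Q).coeff (2 * i - 1)‖ * R ^ m) := by
              rw [max_mul_of_nonneg _ _ (le_of_lt hRm)]
          _ < M := max_lt ht1 ht2
      have hylt : ‖-((A * (Q * Q)).coeff m)‖ < ‖(P * P).coeff m‖ := by
        rw [norm_neg, ← mul_lt_mul_iff_of_pos_right hRm, hPPeq]
        exact hynorm
      have hfin : ‖(P * P - A * (Q * Q)).coeff m‖ * R ^ m = M := by
        rw [Polynomial.coeff_sub, sub_eq_add_neg, norm_add_eq_of_lt hylt, hPPeq]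
      calc M = ‖(P * P - A * (Q * Q)).coeff m‖ * R ^ m := hfin.symm
        _ ≤ _ := gauss_coeff_le hR0 _ m
  · -- distinct norms: ultrametric equality
    by_contra hcon
    push_neg at hcon
    set x : Polynomial K := P * P with hx
    set y : Polynomial K := A * (Q * Q) with hy
    have h1 : gaussNormR R x ≤ max (gaussNormR R (x - y)) (gaussNormR R y) := by
      have := gauss_sub_le hR0 (x - y) (-y)
      rw [sub_neg_eq_add, sub_add_cancel, gauss_neg hR0] at this
      exact this
    have h2 : gaussNormR R y ≤ max (gaussNormR R x) (gaussNormR R (x - y)) := by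
      have := gauss_sub_le hR0 x (x - y)
      rw [sub_sub_cancel] at this
      exact this
    rw [hGAQ] at h1 h2
    rcases max_cases (gaussNormR R (x - y)) M with ⟨he, _⟩ | ⟨he, _⟩
    · rw [he] at h1; linarith
    · rw [he] at h1
      rcases max_cases (gaussNormR R x) (gaussNormR R (x - y)) with ⟨he2, _⟩ | ⟨he2, _⟩
      · rw [he2] at h2
        exact hPA (le_antisymm h1 h2)
      · rw [he2] at h2; linarith

end Aux

/-- Let `K` be a complete algebraically closed non-archimedean field of
residue characteristic ≠ 2, `R > 1`, and let `H = ℋ(ζ_{0,R})` be the completed residue field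
at the point `x = ζ_{0,R}` of the parameter line: a complete non-archimedean valued field
containing `K(λ)` densely, with `|Σ c_k λ^k| = max ‖c_k‖ R^k`.  Then `λ` has no square root
in `H` (while the degree-2 extension `H(√λ)` contains one), and the fixed-point polynomial
`z² − z + λ` of the family `f_λ(z) = z² + λ` is irreducible over `H`; hence each of its
roots ξ (the type I repelling fixed points over `x`) generates a degree-2 extension of `H`,
i.e. has multiplicity `[ℋ(ξ) : ℋ(x)] = 2`. -/
theorem stmt19 {K : Type*} [NontriviallyNormedField K] [IsUltrametricDist K]
    [CompleteSpace K] [IsAlgClosed K]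
    (h2 : ‖(2 : K)‖ = 1) (R : ℝ) (hR : 1 < R)
    (H : Type*) [Field H] (ι : RatFunc K →+* H)
    (w : AbsoluteValue H ℝ)
    (hna : ∀ x y : H, w (x + y) ≤ max (w x) (w y))
    (hnorm : ∀ P : Polynomial K,
      w (ι (algebraMap (Polynomial K) (RatFunc K) P)) = gaussNormR R P)
    (hdense : ∀ x : H, ∀ ε : ℝ, 0 < ε → ∃ f : RatFunc K, w (x - ι f) < ε)
    (hcomplete : ∀ f : ℕ → H,
      (∀ ε : ℝ, 0 < ε → ∃ N : ℕ, ∀ m ≥ N, ∀ n ≥ N, w (f m - f n) < ε) →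
      ∃ x : H, ∀ ε : ℝ, 0 < ε → ∃ N : ℕ, ∀ n ≥ N, w (f n - x) < ε) :
    (¬ ∃ h : H, h ^ 2 = ι RatFunc.X) ∧
      Irreducible (X ^ 2 - X + C (ι RatFunc.X) : Polynomial H) := by
  have hR0 : (0:ℝ) < R := lt_trans one_pos hR
  -- multiplicativity of the Gauss norm, via `w`
  have hmul : ∀ S T : Polynomial K, gaussNormR R (S * T) = gaussNormR R S * gaussNormR R T := by
    intro S T
    rw [← hnorm S, ← hnorm T, ← hnorm (S * T), map_mul, map_mul, w.map_mul]
  -- `w 2 = 1`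
  have hw2 : w (2 : H) = 1 := by
    have h1 : C (2:K) = (2 : Polynomial K) := map_ofNat C 2
    have h3 : ι (algebraMap (Polynomial K) (RatFunc K) (C (2:K))) = (2:H) := by
      rw [h1, map_ofNat, map_ofNat]
    have h4 := hnorm (C (2:K))
    rw [gauss_C, h2, h3] at h4
    exact h4
  -- no square root of a dominated linear polynomial exists in `H`
  have hkey : ∀ c₀ c₁ : K, ‖c₁‖ = 1 → ‖c₀‖ < R →
      ¬ ∃ h : H, h ^ 2 = ι (algebraMap (Polynomial K) (RatFunc K) (C c₀ + C c₁ * X)) := by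
    rintro c₀ c₁ hc1 hc0 ⟨h, hh⟩
    set A : Polynomial K := C c₀ + C c₁ * X with hA
    set a : H := ι (algebraMap (Polynomial K) (RatFunc K) A) with ha
    have hwa : w a = R := by rw [ha, hnorm, gauss_linear hR hc1 hc0]
    set s : ℝ := w h with hs
    have hs2 : s * s = R := by
      rw [hs, ← w.map_mul, ← pow_two, hh, hwa]
    have hs0 : 0 ≤ s := w.nonneg h
    have hs1 : 1 < s := by nlinarith
    have hsR : s < R := by nlinarith
    obtain ⟨f, hf⟩ := hdense h 1 one_pos
    set u : H := ι f with hu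
    have hf' : w (u - h) < 1 := by rw [hu, w.map_sub]; exact hf
    have hup : w (u ^ 2 - a) < R := by
      have he : u ^ 2 - a = (u - h) * (u + h) := by rw [← hh]; ring
      have h4 : w (u + h) ≤ s := by
        have h5 : u + h = (u - h) + 2 * h := by ring
        rw [h5]
        refine (hna _ _).trans ?_
        have h6 : w (2 * h) = s := by rw [w.map_mul, hw2, one_mul]
        rw [h6]
        exact max_le (le_trans hf'.le (by linarith)) le_rfl
      rw [he, w.map_mul]
      have h7 : 0 ≤ w (u + h) := w.nonneg _
      have h8 : 0 ≤ w (u - h) := w.nonneg _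
      nlinarith
    set P : Polynomial K := f.num with hPdef
    set Q : Polynomial K := f.denom with hQdef
    have hQ0 : Q ≠ 0 := RatFunc.denom_ne_zero f
    have hkey' := gauss_key hR hmul hc1 hc0 P Q hQ0
    have hfQ : f * algebraMap (Polynomial K) (RatFunc K) Q
        = algebraMap (Polynomial K) (RatFunc K) P := by
      conv_lhs => rw [← RatFunc.num_div_denom f]
      rw [div_mul_cancel₀]
      exact RatFunc.algebraMap_ne_zero hQ0
    have hmulQ : u * ι (algebraMap (Polynomial K) (RatFunc K) Q)
        = ι (algebraMap (Polynomial K) (RatFunc K) P) := by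
      rw [hu, ← map_mul, hfQ]
    have hid : (u ^ 2 - a) * ι (algebraMap (Polynomial K) (RatFunc K) Q) ^ 2
        = ι (algebraMap (Polynomial K) (RatFunc K) (P * P - A * (Q * Q))) := by
      simp only [map_sub, map_mul]
      rw [← ha]
      linear_combination (u * ι (algebraMap (Polynomial K) (RatFunc K) Q)
        + ι (algebraMap (Polynomial K) (RatFunc K) P)) * hmulQ
    have hwid : w (u ^ 2 - a) * (gaussNormR R Q) ^ 2
        = gaussNormR R (P * P - A * (Q * Q)) := by
      rw [← hnorm (P * P - A * (Q * Q)), ← hid, w.map_mul]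
      congr 1
      rw [pow_two, pow_two, w.map_mul, hnorm]
    have hgQ : 0 < gaussNormR R Q := gauss_pos hR0 hQ0
    nlinarith [hkey', hup, hwid, hgQ, sq_nonneg (gaussNormR R Q),
      mul_lt_mul_of_pos_right hup (pow_pos hgQ 2)]
  constructor
  · -- part 1 : λ has no square root in H
    have h0 : ι (algebraMap (Polynomial K) (RatFunc K) (C (0:K) + C (1:K) * X))
        = ι RatFunc.X := by
      rw [map_zero, map_one, zero_add, one_mul, RatFunc.algebraMap_X]
    have hk := hkey 0 1 norm_one (by rw [norm_zero]; linarith)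
    rw [h0] at hk
    exact hk
  · -- part 2 : the fixed-point polynomial is irreducible
    set a : H := ι RatFunc.X with ha
    have hdeg : (X ^ 2 - X + C a : Polynomial H).natDegree = 2 := by compute_degree!
    rw [Polynomial.irreducible_iff_roots_eq_zero_of_degree_le_three
      (by rw [hdeg]) (by rw [hdeg]; norm_num)]
    rw [Multiset.eq_zero_iff_forall_notMem]
    intro z hz
    have hp0 : (X ^ 2 - X + C a : Polynomial H) ≠ 0 := by
      intro h0
      rw [h0] at hdeg
      simp at hdeg
    rw [Polynomial.mem_roots hp0] at hz
    have hz' : z ^ 2 - z + a = 0 := by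
      simpa [Polynomial.IsRoot] using hz
    have hn4 : ‖(-4 : K)‖ = 1 := by
      rw [norm_neg]
      have h4 : (4:K) = 2 * 2 := by norm_num
      rw [h4, norm_mul, h2, one_mul]
    have h41 : ι (algebraMap (Polynomial K) (RatFunc K) (C (1:K) + C (-4:K) * X))
        = 1 - 4 * a := by
      have hC4 : C (-4:K) = (-4 : Polynomial K) := by rw [map_neg, map_ofNat]
      simp only [hC4, map_add, map_one, map_mul, map_neg, map_ofNat,
        RatFunc.algebraMap_X, ← ha]
      ring
    refine hkey 1 (-4) hn4 (by rw [norm_one]; exact hR) ⟨2 * z - 1, ?_⟩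
    rw [h41]
    linear_combination (4:H) * hz'
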